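/- (Convergence of the chaos expansion of the solution.) Let E be a real Banach space, T > 0, K > 0, and let p₁, p₂, r be real numbers with r ≥ p₁ and r ≥ p₂. Let (g_γ)_{γ∈𝓘} be a family in E, let (f_γ)_{γ∈𝓘} and (u_γ)_{γ∈𝓘} be families of continuous functions [0,T] → E, and assume the per-coefficient estimate ‖u_γ(t)‖_E ≤ K ( ‖g_γ‖_E + ∫_0^t ‖f_γ(s)‖_E ds ) for all γ ∈ 𝓘 and t ∈ [0,T]. If ∑_{γ∈𝓘} ‖g_γ‖²_E (2ℕ)^{-p₂γ} < ∞ and ∑_{γ∈𝓘} (sup_{t∈[0,T]} ‖f_γ(t)‖_E)² (2ℕ)^{-p₁γ} < ∞, then ∑_{γ∈𝓘} (sup_{t∈[0,T]} ‖u_γ(t)‖_E)² (2ℕ)^{-rγ} ≤ 2K² ( ∑_{γ∈𝓘} ‖g_γ‖²_E (2ℕ)^{-p₂γ} + T² ∑_{γ∈𝓘} (sup_{t∈[0,T]} ‖f_γ(t)‖_E)² (2ℕ)^{-p₁γ} ) < ∞. -/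

import Mathlib

open Set MeasureTheory

/-- The Kondratiev weight `(2ℕ)^{rγ} = ∏_{i=1}^∞ (2i)^{r γ_i}` on multi-indices,
indexed from `0` (so the classical entry `γ_i`, `i ≥ 1`, is `γ (i-1)`). -/
noncomputable def kondratievWeight (r : ℝ) (γ : ℕ →₀ ℕ) : ℝ :=
  ∏ i ∈ γ.support, ((2 * (i + 1) : ℝ)) ^ (r * (γ i : ℝ))

lemma kondratievWeight_pos (r : ℝ) (γ : ℕ →₀ ℕ) : 0 < kondratievWeight r γ := by
  unfold kondratievWeight
  exact Finset.prod_pos fun i _ => Real.rpow_pos_of_pos (by positivity) _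

lemma kondratievWeight_mono {p r : ℝ} (h : p ≤ r) (γ : ℕ →₀ ℕ) :
    kondratievWeight (-r) γ ≤ kondratievWeight (-p) γ := by
  unfold kondratievWeight
  apply Finset.prod_le_prod
  · intro i _
    exact (Real.rpow_pos_of_pos (by positivity) _).le
  · intro i _
    apply Real.rpow_le_rpow_of_exponent_le
    · have : (0:ℝ) ≤ (i : ℝ) := Nat.cast_nonneg i
      linarith
    · have : (0:ℝ) ≤ (γ i : ℝ) := Nat.cast_nonneg _
      nlinarith

/-- convergence of the chaos expansion of the solution: from the
per-coefficient a priori estimate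
`‖u_γ(t)‖ ≤ K (‖g_γ‖ + ∫_0^t ‖f_γ(s)‖ ds)` and the summability of the weighted data
norms, the weighted sum of squared sup-norms of the solution coefficients converges,
with the explicit bound `2K² (∑_γ ‖g_γ‖² (2ℕ)^{-p₂γ} + T² ∑_γ (sup_t ‖f_γ(t)‖)² (2ℕ)^{-p₁γ})`. -/
theorem chaos_expansion_convergence
    {E : Type*} [NormedAddCommGroup E]
    (T K : ℝ) (hT : 0 < T) (hK : 0 < K)
    (p₁ p₂ r : ℝ) (hr₁ : p₁ ≤ r) (hr₂ : p₂ ≤ r)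
    (g : (ℕ →₀ ℕ) → E) (f u : (ℕ →₀ ℕ) → ℝ → E)
    (hf : ∀ γ : ℕ →₀ ℕ, ContinuousOn (f γ) (Icc 0 T))
    (hu : ∀ γ : ℕ →₀ ℕ, ContinuousOn (u γ) (Icc 0 T))
    (hest : ∀ γ : ℕ →₀ ℕ, ∀ t ∈ Icc (0 : ℝ) T,
      ‖u γ t‖ ≤ K * (‖g γ‖ + ∫ s in (0 : ℝ)..t, ‖f γ s‖))
    (hg : Summable (fun γ : ℕ →₀ ℕ => ‖g γ‖ ^ 2 * kondratievWeight (-p₂) γ))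
    (hfs : Summable (fun γ : ℕ →₀ ℕ =>
      (⨆ t : Icc (0 : ℝ) T, ‖f γ ↑t‖) ^ 2 * kondratievWeight (-p₁) γ)) :
    Summable (fun γ : ℕ →₀ ℕ =>
      (⨆ t : Icc (0 : ℝ) T, ‖u γ ↑t‖) ^ 2 * kondratievWeight (-r) γ) ∧
    ∑' γ : ℕ →₀ ℕ, (⨆ t : Icc (0 : ℝ) T, ‖u γ ↑t‖) ^ 2 * kondratievWeight (-r) γ ≤
      2 * K ^ 2 * ((∑' γ : ℕ →₀ ℕ, ‖g γ‖ ^ 2 * kondratievWeight (-p₂) γ) +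
        T ^ 2 * ∑' γ : ℕ →₀ ℕ,
          (⨆ t : Icc (0 : ℝ) T, ‖f γ ↑t‖) ^ 2 * kondratievWeight (-p₁) γ) := by
  haveI : Nonempty (Icc (0:ℝ) T) := ⟨⟨0, le_refl 0, hT.le⟩⟩
  set Mf : (ℕ →₀ ℕ) → ℝ := fun γ => ⨆ t : Icc (0:ℝ) T, ‖f γ ↑t‖ with hMf
  set Mu : (ℕ →₀ ℕ) → ℝ := fun γ => ⨆ t : Icc (0:ℝ) T, ‖u γ ↑t‖ with hMu
  have bdd : ∀ (φ : ℝ → E), ContinuousOn φ (Icc 0 T) →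
      BddAbove (range fun t : Icc (0:ℝ) T => ‖φ ↑t‖) := by
    intro φ hφ
    have h1 : (range fun t : Icc (0:ℝ) T => ‖φ ↑t‖) = (fun t => ‖φ t‖) '' Icc 0 T := by
      rw [show (fun t : Icc (0:ℝ) T => ‖φ ↑t‖) = (fun t => ‖φ t‖) ∘ (↑) from rfl,
        Set.range_comp, Subtype.range_coe]
    rw [h1]
    exact (isCompact_Icc.image_of_continuousOn hφ.norm).bddAbove
  have hMf_nonneg : ∀ γ, 0 ≤ Mf γ := fun γ => Real.iSup_nonneg fun t => norm_nonneg _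
  have hMu_nonneg : ∀ γ, 0 ≤ Mu γ := fun γ => Real.iSup_nonneg fun t => norm_nonneg _
  -- integral bound
  have hint : ∀ γ, ∀ t ∈ Icc (0:ℝ) T, (∫ s in (0:ℝ)..t, ‖f γ s‖) ≤ T * Mf γ := by
    intro γ t ht
    have hsub : Icc (0:ℝ) t ⊆ Icc 0 T := Icc_subset_Icc le_rfl ht.2
    have hInt : IntervalIntegrable (fun s => ‖f γ s‖) volume 0 t := by
      apply ContinuousOn.intervalIntegrable
      rw [uIcc_of_le ht.1]
      exact ((hf γ).norm).mono hsub
    have h1 : (∫ s in (0:ℝ)..t, ‖f γ s‖) ≤ ∫ s in (0:ℝ)..t, Mf γ := by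
      apply intervalIntegral.integral_mono_on ht.1 hInt intervalIntegrable_const
      intro s hs
      exact le_ciSup (bdd (f γ) (hf γ)) ⟨s, hsub hs⟩
    have h2 : (∫ s in (0:ℝ)..t, Mf γ) = t * Mf γ := by simp
    calc (∫ s in (0:ℝ)..t, ‖f γ s‖) ≤ t * Mf γ := h1.trans h2.le
      _ ≤ T * Mf γ := mul_le_mul_of_nonneg_right ht.2 (hMf_nonneg γ)
  have hMu_le : ∀ γ, Mu γ ≤ K * (‖g γ‖ + T * Mf γ) := by
    intro γ
    apply ciSup_le
    intro t
    calc ‖u γ ↑t‖ ≤ K * (‖g γ‖ + ∫ s in (0:ℝ)..(t:ℝ), ‖f γ s‖) := hest γ t t.2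
      _ ≤ K * (‖g γ‖ + T * Mf γ) := by
          apply mul_le_mul_of_nonneg_left _ hK.le
          exact add_le_add_right (hint γ t t.2) _
  -- key pointwise inequality
  have key : ∀ γ, Mu γ ^ 2 * kondratievWeight (-r) γ ≤
      2 * K ^ 2 * (‖g γ‖ ^ 2 * kondratievWeight (-p₂) γ) +
      2 * K ^ 2 * T ^ 2 * (Mf γ ^ 2 * kondratievWeight (-p₁) γ) := by
    intro γ
    have hsq : Mu γ ^ 2 ≤ 2 * K ^ 2 * ‖g γ‖ ^ 2 + 2 * K ^ 2 * T ^ 2 * Mf γ ^ 2 := by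
      nlinarith [hMu_le γ, hMu_nonneg γ, hMf_nonneg γ, norm_nonneg (g γ), hK.le, hT.le,
        sq_nonneg (‖g γ‖ - T * Mf γ)]
    have w2 := kondratievWeight_mono hr₂ γ
    have w1 := kondratievWeight_mono hr₁ γ
    have wrpos := (kondratievWeight_pos (-r) γ).le
    calc Mu γ ^ 2 * kondratievWeight (-r) γ
        ≤ (2 * K ^ 2 * ‖g γ‖ ^ 2 + 2 * K ^ 2 * T ^ 2 * Mf γ ^ 2) * kondratievWeight (-r) γ :=
          mul_le_mul_of_nonneg_right hsq wrpos
      _ = 2 * K ^ 2 * ‖g γ‖ ^ 2 * kondratievWeight (-r) γ +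
          2 * K ^ 2 * T ^ 2 * Mf γ ^ 2 * kondratievWeight (-r) γ := by ring
      _ ≤ 2 * K ^ 2 * (‖g γ‖ ^ 2 * kondratievWeight (-p₂) γ) +
          2 * K ^ 2 * T ^ 2 * (Mf γ ^ 2 * kondratievWeight (-p₁) γ) := by
          have h1 := mul_le_mul_of_nonneg_left w2
            (show (0:ℝ) ≤ 2 * K ^ 2 * ‖g γ‖ ^ 2 by positivity)
          have h2 := mul_le_mul_of_nonneg_left w1
            (show (0:ℝ) ≤ 2 * K ^ 2 * T ^ 2 * Mf γ ^ 2 by positivity)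
          nlinarith [h1, h2]
  have hsumR : Summable (fun γ => 2 * K ^ 2 * (‖g γ‖ ^ 2 * kondratievWeight (-p₂) γ) +
      2 * K ^ 2 * T ^ 2 * (Mf γ ^ 2 * kondratievWeight (-p₁) γ)) :=
    (hg.mul_left _).add (hfs.mul_left _)
  have hsumU : Summable (fun γ => Mu γ ^ 2 * kondratievWeight (-r) γ) :=
    Summable.of_nonneg_of_le
      (fun γ => mul_nonneg (sq_nonneg _) (kondratievWeight_pos (-r) γ).le) key hsumR
  refine ⟨hsumU, ?_⟩
  calc (∑' γ, Mu γ ^ 2 * kondratievWeight (-r) γ)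
      ≤ ∑' γ, (2 * K ^ 2 * (‖g γ‖ ^ 2 * kondratievWeight (-p₂) γ) +
        2 * K ^ 2 * T ^ 2 * (Mf γ ^ 2 * kondratievWeight (-p₁) γ)) :=
        Summable.tsum_le_tsum key hsumU hsumR
    _ = 2 * K ^ 2 * (∑' γ, ‖g γ‖ ^ 2 * kondratievWeight (-p₂) γ) +
        2 * K ^ 2 * T ^ 2 * (∑' γ, Mf γ ^ 2 * kondratievWeight (-p₁) γ) := by
        rw [Summable.tsum_add (hg.mul_left _) (hfs.mul_left _), tsum_mul_left, tsum_mul_left]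
    _ = 2 * K ^ 2 * ((∑' γ, ‖g γ‖ ^ 2 * kondratievWeight (-p₂) γ) +
        T ^ 2 * ∑' γ, Mf γ ^ 2 * kondratievWeight (-p₁) γ) := by ring
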